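/- Fix an integer n ≥ 1 and consider real matrices with rows and columns indexed by all subsets of {1,…,n}. For 0 ≤ i ≤ n+1 let C_i be the matrix with (X,Y) entry 1 if |X| = i−1, |Y| = i and X ⊆ Y, and 0 otherwise (so C_0 = 0 and C_{n+1} = 0), and let E'_i be the diagonal matrix with (X,X) entry 1 if |X| = i and 0 otherwise. Then for every i with 0 ≤ i ≤ n: C_{i+1}·C_{i+1}ᵀ − C_iᵀ·C_i = (n−2i)·E'_i. -/

import Mathlib

open Matrix

/-- The matrix `C_i`, indexed by the subsets of `{1,…,n}`, with `(X,Y)` entry `1` iff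
`|X| = i − 1`, `|Y| = i` and `X ⊆ Y` (in particular `C_0 = 0` and `C_{n+1} = 0`). -/
def Cmat (n i : ℕ) : Matrix (Finset (Fin n)) (Finset (Fin n)) ℝ :=
  Matrix.of fun X Y => if X.card + 1 = i ∧ Y.card = i ∧ X ⊆ Y then 1 else 0

/-- The diagonal matrix `E'_i` with `(X,X)` entry `1` iff `|X| = i`. -/
def Emat (n i : ℕ) : Matrix (Finset (Fin n)) (Finset (Fin n)) ℝ :=
  Matrix.of fun X Y => if X = Y ∧ X.card = i then 1 else 0


lemma helperA {n : ℕ} (X : Finset (Fin n)) :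
    (Finset.univ.filter fun Z : Finset (Fin n) => X ⊆ Z ∧ Z.card = X.card + 1).card
      = n - X.card := by
  have h : Xᶜ.card = (Finset.univ.filter fun Z : Finset (Fin n) => X ⊆ Z ∧ Z.card = X.card + 1).card := by
    apply Finset.card_bij (fun a _ => insert a X)
    · intro a ha
      simp only [Finset.mem_compl] at ha
      simp [Finset.mem_filter, Finset.card_insert_of_notMem ha]
    · intro a ha b hb hab
      simp only [Finset.mem_compl] at ha hb
      have : a ∈ insert b X := hab ▸ Finset.mem_insert_self a X
      rcases Finset.mem_insert.1 this with h | h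
      · exact h
      · exact absurd h ha
    · intro Z hZ
      simp only [Finset.mem_filter, Finset.mem_univ, true_and] at hZ
      obtain ⟨hsub, hcard⟩ := hZ
      have hc : (Z \ X).card = 1 := by
        rw [Finset.card_sdiff_of_subset hsub]; omega
      obtain ⟨a, ha⟩ := Finset.card_eq_one.1 hc
      have haX : a ∉ X := by
        have : a ∈ Z \ X := ha ▸ Finset.mem_singleton_self a
        exact (Finset.mem_sdiff.1 this).2
      refine ⟨a, Finset.mem_compl.2 haX, ?_⟩
      apply Finset.eq_of_subset_of_card_le
      · intro x hx
        rcases Finset.mem_insert.1 hx with h | h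
        · have : x ∈ Z \ X := h ▸ ha ▸ Finset.mem_singleton_self a
          exact (Finset.mem_sdiff.1 this).1
        · exact hsub h
      · rw [Finset.card_insert_of_notMem haX]; omega
  rw [← h, Finset.card_compl, Fintype.card_fin]

lemma helperB {n : ℕ} (X : Finset (Fin n)) :
    (Finset.univ.filter fun Z : Finset (Fin n) => Z ⊆ X ∧ Z.card + 1 = X.card).card
      = X.card := by
  rcases Nat.eq_zero_or_pos X.card with h0 | hpos
  · rw [h0]
    convert Finset.card_empty
    rw [Finset.filter_eq_empty_iff]
    intro Z _
    omega
  · have : (Finset.univ.filter fun Z : Finset (Fin n) => Z ⊆ X ∧ Z.card + 1 = X.card)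
        = X.powersetCard (X.card - 1) := by
      ext Z
      simp only [Finset.mem_filter, Finset.mem_univ, true_and, Finset.mem_powersetCard]
      constructor
      · rintro ⟨h1, h2⟩; exact ⟨h1, by omega⟩
      · rintro ⟨h1, h2⟩; exact ⟨h1, by omega⟩
    rw [this, Finset.card_powersetCard, Nat.choose_symm hpos, Nat.choose_one_right]

lemma helperC {n i : ℕ} {X Y : Finset (Fin n)} (hX : X.card = i) (hY : Y.card = i)
    (hne : X ≠ Y) :
    (Finset.univ.filter fun Z : Finset (Fin n) => Z.card = i + 1 ∧ X ⊆ Z ∧ Y ⊆ Z).card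
      = (Finset.univ.filter fun Z : Finset (Fin n) => Z.card + 1 = i ∧ Z ⊆ X ∧ Z ⊆ Y).card := by
  have hYX : ¬ Y ⊆ X := fun h => hne (Finset.eq_of_subset_of_card_le h (by omega)).symm
  have hu : i + 1 ≤ (X ∪ Y).card := by
    have : X ⊂ X ∪ Y := Finset.ssubset_iff_of_subset Finset.subset_union_left |>.2 (by
      obtain ⟨a, ha, ha'⟩ := Finset.not_subset.1 hYX
      exact ⟨a, Finset.mem_union_right _ ha, ha'⟩)
    have := Finset.card_lt_card this
    omega
  have hXY : ¬ X ⊆ Y := fun h => hne (Finset.eq_of_subset_of_card_le h (by omega))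
  have hint : (X ∩ Y).card < i := by
    have : X ∩ Y ⊂ X := Finset.ssubset_iff_of_subset Finset.inter_subset_left |>.2 (by
      obtain ⟨a, ha, ha'⟩ := Finset.not_subset.1 hXY
      exact ⟨a, ha, fun hm => ha' (Finset.mem_inter.1 hm).2⟩)
    have := Finset.card_lt_card this
    omega
  have hsum : (X ∪ Y).card + (X ∩ Y).card = 2 * i := by
    have := Finset.card_union_add_card_inter X Y
    omega
  have hleft : (Finset.univ.filter fun Z : Finset (Fin n) => Z.card = i + 1 ∧ X ⊆ Z ∧ Y ⊆ Z)
      = if (X ∪ Y).card = i + 1 then {X ∪ Y} else ∅ := by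
    split_ifs with h
    · ext Z
      simp only [Finset.mem_filter, Finset.mem_univ, true_and, Finset.mem_singleton]
      constructor
      · rintro ⟨h1, h2, h3⟩
        exact (Finset.eq_of_subset_of_card_le (Finset.union_subset h2 h3) (by omega)).symm
      · rintro rfl
        exact ⟨h, Finset.subset_union_left, Finset.subset_union_right⟩
    · rw [Finset.filter_eq_empty_iff]
      rintro Z _ ⟨h1, h2, h3⟩
      have := Finset.card_le_card (Finset.union_subset h2 h3)
      omega
  have hright : (Finset.univ.filter fun Z : Finset (Fin n) => Z.card + 1 = i ∧ Z ⊆ X ∧ Z ⊆ Y)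
      = if (X ∩ Y).card + 1 = i then {X ∩ Y} else ∅ := by
    split_ifs with h
    · ext Z
      simp only [Finset.mem_filter, Finset.mem_univ, true_and, Finset.mem_singleton]
      constructor
      · rintro ⟨h1, h2, h3⟩
        exact Finset.eq_of_subset_of_card_le (Finset.subset_inter h2 h3) (by omega)
      · rintro rfl
        exact ⟨h, Finset.inter_subset_left, Finset.inter_subset_right⟩
    · rw [Finset.filter_eq_empty_iff]
      rintro Z _ ⟨h1, h2, h3⟩
      have := Finset.card_le_card (Finset.subset_inter h2 h3)
      omega
  rw [hleft, hright]
  by_cases h : (X ∪ Y).card = i + 1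
  · rw [if_pos h, if_pos (by omega)]
    simp
  · rw [if_neg h, if_neg (by omega)]

lemma entryLemma (n : ℕ) (hn : 1 ≤ n) (i : ℕ) (hi : i ≤ n) (X Y : Finset (Fin n)) :
    ((Finset.filter (fun x => (X.card + 1 = i + 1 ∧ x.card = i + 1 ∧ X ⊆ x) ∧ Y.card + 1 = i + 1 ∧ x.card = i + 1 ∧ Y ⊆ x)
            Finset.univ).card : ℝ) -
      ((Finset.filter (fun x => (x.card + 1 = i ∧ X.card = i ∧ x ⊆ X) ∧ x.card + 1 = i ∧ Y.card = i ∧ x ⊆ Y)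
            Finset.univ).card : ℝ) =
    ((n : ℝ) - 2 * (i : ℝ)) * if X = Y ∧ X.card = i then 1 else 0 := by
  by_cases hX : X.card = i
  · by_cases hY : Y.card = i
    · by_cases hXY : X = Y
      · subst hXY
        rw [if_pos ⟨rfl, hX⟩, mul_one]
        have e1 : (Finset.filter (fun x : Finset (Fin n) =>
            (X.card + 1 = i + 1 ∧ x.card = i + 1 ∧ X ⊆ x) ∧ X.card + 1 = i + 1 ∧ x.card = i + 1 ∧ X ⊆ x) Finset.univ)
            = Finset.univ.filter fun Z : Finset (Fin n) => X ⊆ Z ∧ Z.card = X.card + 1 := by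
          apply Finset.filter_congr
          intro Z _
          constructor
          · rintro ⟨⟨h1, h2, h3⟩, -⟩; exact ⟨h3, by omega⟩
          · rintro ⟨h1, h2⟩; exact ⟨⟨by omega, by omega, h1⟩, by omega, by omega, h1⟩
        have e2 : (Finset.filter (fun x : Finset (Fin n) =>
            (x.card + 1 = i ∧ X.card = i ∧ x ⊆ X) ∧ x.card + 1 = i ∧ X.card = i ∧ x ⊆ X) Finset.univ)
            = Finset.univ.filter fun Z : Finset (Fin n) => Z ⊆ X ∧ Z.card + 1 = X.card := by
          apply Finset.filter_congr
          intro Z _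
          constructor
          · rintro ⟨⟨h1, h2, h3⟩, -⟩; exact ⟨h3, by omega⟩
          · rintro ⟨h1, h2⟩; exact ⟨⟨by omega, hX, h1⟩, by omega, hX, h1⟩
        rw [e1, e2, helperA, helperB, hX, Nat.cast_sub hi]
        ring
      · rw [if_neg (fun h => hXY h.1), mul_zero]
        have e1 : (Finset.filter (fun x : Finset (Fin n) =>
            (X.card + 1 = i + 1 ∧ x.card = i + 1 ∧ X ⊆ x) ∧ Y.card + 1 = i + 1 ∧ x.card = i + 1 ∧ Y ⊆ x) Finset.univ)
            = Finset.univ.filter fun Z : Finset (Fin n) => Z.card = i + 1 ∧ X ⊆ Z ∧ Y ⊆ Z := by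
          apply Finset.filter_congr
          intro Z _
          constructor
          · rintro ⟨⟨h1, h2, h3⟩, ⟨h4, h5, h6⟩⟩; exact ⟨h2, h3, h6⟩
          · rintro ⟨h1, h2, h3⟩; exact ⟨⟨by omega, h1, h2⟩, by omega, h1, h3⟩
        have e2 : (Finset.filter (fun x : Finset (Fin n) =>
            (x.card + 1 = i ∧ X.card = i ∧ x ⊆ X) ∧ x.card + 1 = i ∧ Y.card = i ∧ x ⊆ Y) Finset.univ)
            = Finset.univ.filter fun Z : Finset (Fin n) => Z.card + 1 = i ∧ Z ⊆ X ∧ Z ⊆ Y := by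
          apply Finset.filter_congr
          intro Z _
          constructor
          · rintro ⟨⟨h1, h2, h3⟩, ⟨h4, h5, h6⟩⟩; exact ⟨h1, h3, h6⟩
          · rintro ⟨h1, h2, h3⟩; exact ⟨⟨h1, hX, h2⟩, h1, hY, h3⟩
        rw [e1, e2, helperC hX hY hXY, sub_self]
    · rw [if_neg (fun h => hY (by rw [← h.1]; exact h.2)), mul_zero]
      have e1 : (Finset.filter (fun x : Finset (Fin n) =>
          (X.card + 1 = i + 1 ∧ x.card = i + 1 ∧ X ⊆ x) ∧ Y.card + 1 = i + 1 ∧ x.card = i + 1 ∧ Y ⊆ x) Finset.univ) = ∅ := by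
        rw [Finset.filter_eq_empty_iff]; rintro Z _ ⟨-, h4, -⟩; omega
      have e2 : (Finset.filter (fun x : Finset (Fin n) =>
          (x.card + 1 = i ∧ X.card = i ∧ x ⊆ X) ∧ x.card + 1 = i ∧ Y.card = i ∧ x ⊆ Y) Finset.univ) = ∅ := by
        rw [Finset.filter_eq_empty_iff]; rintro Z _ ⟨-, -, h5, -⟩; omega
      rw [e1, e2]; simp
  · rw [if_neg (fun h => hX h.2), mul_zero]
    have e1 : (Finset.filter (fun x : Finset (Fin n) =>
        (X.card + 1 = i + 1 ∧ x.card = i + 1 ∧ X ⊆ x) ∧ Y.card + 1 = i + 1 ∧ x.card = i + 1 ∧ Y ⊆ x) Finset.univ) = ∅ := by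
      rw [Finset.filter_eq_empty_iff]; rintro Z _ ⟨⟨h1, -⟩, -⟩; omega
    have e2 : (Finset.filter (fun x : Finset (Fin n) =>
        (x.card + 1 = i ∧ X.card = i ∧ x ⊆ X) ∧ x.card + 1 = i ∧ Y.card = i ∧ x ⊆ Y) Finset.univ) = ∅ := by
      rw [Finset.filter_eq_empty_iff]; rintro Z _ ⟨⟨-, h2, -⟩, -⟩; omega
    rw [e1, e2]; simp

/-- for `0 ≤ i ≤ n`, `C_{i+1}·C_{i+1}ᵀ − C_iᵀ·C_i = (n − 2i)·E'_i`. -/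
theorem statement10 (n : ℕ) (hn : 1 ≤ n) (i : ℕ) (hi : i ≤ n) :
    Cmat n (i + 1) * (Cmat n (i + 1))ᵀ - (Cmat n i)ᵀ * Cmat n i
      = ((n : ℝ) - 2 * (i : ℝ)) • Emat n i := by
  ext X Y
  simp only [Matrix.sub_apply, Matrix.mul_apply, Matrix.transpose_apply, Matrix.smul_apply,
    Cmat, Emat, Matrix.of_apply, smul_eq_mul, ite_mul, zero_mul, one_mul, ← ite_and]
  rw [Finset.sum_boole, Finset.sum_boole]
  exact entryLemma n hn i hi X Y
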